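/- Let f be an unbounded modulus function that is not compatible. Then there exists a sequence (B_k) of nonempty closed subsets of ℝ (with the usual metric) and B = {0} such that (B_k) is Wijsman strong Cesàro convergent to B but (B_k) is not Wijsman f-strong Cesàro convergent to B. Consequently, if every Wijsman strong Cesàro convergent sequence of closed subsets of ℝ is Wijsman f-strong Cesàro convergent to the same limit, then f is compatible. -/
import Mathlib


open Filter Metric Set

/-- `f : ℝ → ℝ` is an (unbounded) modulus function (considered on `[0,∞)`):
`f x = 0 ↔ x = 0`, subadditive, increasing, continuous from the right at `0`,
and unbounded. -/
def IsModulus (f : ℝ → ℝ) : Prop :=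
  (∀ x ∈ Set.Ici (0:ℝ), 0 ≤ f x) ∧
  (∀ x ∈ Set.Ici (0:ℝ), (f x = 0 ↔ x = 0)) ∧
  (∀ x ∈ Set.Ici (0:ℝ), ∀ y ∈ Set.Ici (0:ℝ), f (x + y) ≤ f x + f y) ∧
  MonotoneOn f (Set.Ici (0:ℝ)) ∧
  ContinuousWithinAt f (Set.Ici (0:ℝ)) 0 ∧
  (∀ M : ℝ, ∃ x ∈ Set.Ici (0:ℝ), M < f x)

/-- `φ(ε) = limsup_n f(nε)/f(n)`. -/
noncomputable def modPhi (f : ℝ → ℝ) (ε : ℝ) : ℝ :=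
  Filter.limsup (fun n : ℕ => f ((n : ℝ) * ε) / f (n : ℝ)) Filter.atTop

/-- A modulus function is compatible if `φ(ε) → 0` as `ε → 0⁺`. -/
def Compatible (f : ℝ → ℝ) : Prop :=
  Filter.Tendsto (modPhi f) (nhdsWithin 0 (Set.Ioi 0)) (nhds 0)

/-- Wijsman statistical convergence of a sequence of subsets of a metric space. -/
def WijsmanStatConv {X : Type*} [MetricSpace X] (A : ℕ → Set X) (B : Set X) : Prop :=
  ∀ x : X, ∀ ε > (0:ℝ),
    Filter.Tendsto (fun n : ℕ =>
      (((Finset.range n).filter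
        (fun j => ε < |infDist x (A j) - infDist x B|)).card : ℝ) / (n : ℝ))
      Filter.atTop (nhds 0)

/-- Wijsman `f`-statistical convergence of a sequence of subsets of a metric space. -/
def WijsmanFStatConv {X : Type*} [MetricSpace X] (f : ℝ → ℝ) (A : ℕ → Set X)
    (B : Set X) : Prop :=
  ∀ x : X, ∀ ε > (0:ℝ),
    Filter.Tendsto (fun n : ℕ =>
      f ((((Finset.range n).filter
        (fun j => ε < |infDist x (A j) - infDist x B|)).card : ℝ)) / f (n : ℝ))
      Filter.atTop (nhds 0)

/-- A real sequence is `f`-strong Cesàro convergent to `L`. -/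
def FStrongCesaro (f : ℝ → ℝ) (x : ℕ → ℝ) (L : ℝ) : Prop :=
  Filter.Tendsto (fun n : ℕ =>
    f (∑ j ∈ Finset.range n, |x j - L|) / f (n : ℝ)) Filter.atTop (nhds 0)

/-- Wijsman `f`-strong Cesàro convergence. -/
def WijsmanFStrongCesaro {X : Type*} [MetricSpace X] (f : ℝ → ℝ) (A : ℕ → Set X)
    (B : Set X) : Prop :=
  ∀ x : X, FStrongCesaro f (fun j => infDist x (A j)) (infDist x B)

/-- Wijsman strong Cesàro convergence (the case `f = id`). -/
def WijsmanStrongCesaro {X : Type*} [MetricSpace X] (A : ℕ → Set X) (B : Set X) : Prop :=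
  ∀ x : X,
    Filter.Tendsto (fun n : ℕ =>
      (∑ j ∈ Finset.range n, |infDist x (A j) - infDist x B|) / (n : ℝ))
      Filter.atTop (nhds 0)

/-- A real sequence is uniformly integrable. -/
def UnifIntegrable (x : ℕ → ℝ) : Prop :=
  Filter.Tendsto (fun c : ℝ =>
    ⨆ n : ℕ, (∑ j ∈ Finset.range n, if c ≤ |x j| then |x j| else 0) / (n : ℝ))
    Filter.atTop (nhds 0)

/-- Wijsman uniform integrability. -/
def WijsmanUnifIntegrable {X : Type*} [MetricSpace X] (A : ℕ → Set X) : Prop :=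
  ∀ x : X, UnifIntegrable (fun j => infDist x (A j))

/-- A lacunary sequence: strictly increasing, starting at `0`,
with gaps `h_r = k_{r+1} - k_r → ∞`. -/
def IsLacunary (k : ℕ → ℕ) : Prop :=
  k 0 = 0 ∧ StrictMono k ∧
    Filter.Tendsto (fun r : ℕ => k (r + 1) - k r) Filter.atTop Filter.atTop

/-- The gaps `h_r` of a lacunary sequence. -/
def lacH (k : ℕ → ℕ) (r : ℕ) : ℕ := k (r + 1) - k r

/-- The blocks `I_r = (k_r, k_{r+1}]` of a lacunary sequence. -/
def lacI (k : ℕ → ℕ) (r : ℕ) : Finset ℕ := Finset.Ioc (k r) (k (r + 1))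

/-- `φ_θ(ε) = limsup_t f(h_t ε)/f(h_t)`. -/
noncomputable def modPhiTheta (f : ℝ → ℝ) (k : ℕ → ℕ) (ε : ℝ) : ℝ :=
  Filter.limsup (fun t : ℕ => f ((lacH k t : ℝ) * ε) / f ((lacH k t : ℝ))) Filter.atTop

/-- `f` is `θ`-compatible if `φ_θ(ε) → 0` as `ε → 0⁺`. -/
def ThetaCompatible (f : ℝ → ℝ) (k : ℕ → ℕ) : Prop :=
  Filter.Tendsto (modPhiTheta f k) (nhdsWithin 0 (Set.Ioi 0)) (nhds 0)

/-- Wijsman `θ`-lacunary statistical convergence. -/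
def WijsmanLacStatConv {X : Type*} [MetricSpace X] (k : ℕ → ℕ) (A : ℕ → Set X)
    (B : Set X) : Prop :=
  ∀ x : X, ∀ ε > (0:ℝ),
    Filter.Tendsto (fun r : ℕ =>
      (((lacI k r).filter
        (fun j => ε < |infDist x (A j) - infDist x B|)).card : ℝ) / (lacH k r : ℝ))
      Filter.atTop (nhds 0)

/-- Wijsman `θ`-lacunary `f`-statistical convergence. -/
def WijsmanLacFStatConv {X : Type*} [MetricSpace X] (f : ℝ → ℝ) (k : ℕ → ℕ)
    (A : ℕ → Set X) (B : Set X) : Prop :=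
  ∀ x : X, ∀ ε > (0:ℝ),
    Filter.Tendsto (fun r : ℕ =>
      f ((((lacI k r).filter
        (fun j => ε < |infDist x (A j) - infDist x B|)).card : ℝ)) / f ((lacH k r : ℝ)))
      Filter.atTop (nhds 0)

/-- Wijsman `θ`-lacunary `f`-strong Cesàro convergence. -/
def WijsmanLacFStrongCesaro {X : Type*} [MetricSpace X] (f : ℝ → ℝ) (k : ℕ → ℕ)
    (A : ℕ → Set X) (B : Set X) : Prop :=
  ∀ x : X,
    Filter.Tendsto (fun r : ℕ =>
      f (∑ j ∈ lacI k r, |infDist x (A j) - infDist x B|) / f ((lacH k r : ℝ)))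
      Filter.atTop (nhds 0)

/-- Wijsman `θ`-lacunary strong Cesàro convergence (the case `f = id`). -/
def WijsmanLacStrongCesaro {X : Type*} [MetricSpace X] (k : ℕ → ℕ)
    (A : ℕ → Set X) (B : Set X) : Prop :=
  ∀ x : X,
    Filter.Tendsto (fun r : ℕ =>
      (∑ j ∈ lacI k r, |infDist x (A j) - infDist x B|) / (lacH k r : ℝ))
      Filter.atTop (nhds 0)

/-- A real sequence is `θ`-lacunary uniformly integrable. -/
def LacUnifIntegrable (k : ℕ → ℕ) (x : ℕ → ℝ) : Prop :=
  Filter.Tendsto (fun M : ℝ =>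
    ⨆ t : ℕ, (∑ j ∈ lacI k t, if M ≤ |x j| then |x j| else 0) / (lacH k t : ℝ))
    Filter.atTop (nhds 0)

/-- Wijsman `θ`-lacunary uniform integrability. -/
def WijsmanLacUnifIntegrable {X : Type*} [MetricSpace X] (k : ℕ → ℕ)
    (A : ℕ → Set X) : Prop :=
  ∀ x : X, LacUnifIntegrable k (fun j => infDist x (A j))


lemma freq_aux (f : ℝ → ℝ)
    (hnn : ∀ x ∈ Set.Ici (0:ℝ), 0 ≤ f x)
    (hz : ∀ x ∈ Set.Ici (0:ℝ), (f x = 0 ↔ x = 0))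
    (hmono : MonotoneOn f (Set.Ici (0:ℝ)))
    (hnc : ¬ Compatible f) :
    ∃ c > (0:ℝ), ∀ m N : ℕ, ∃ n : ℕ, N ≤ n ∧
      c/2 < f ((n:ℝ)/((m:ℝ)+1)) / f (n:ℝ) := by
  have hf0 : f 0 = 0 := (hz 0 (Set.mem_Ici.mpr le_rfl)).mpr rfl
  -- basic bounds for the quotient sequence
  have hge : ∀ ε : ℝ, 0 < ε → ∀ n : ℕ, 0 ≤ f ((n:ℝ) * ε) / f (n:ℝ) := by
    intro ε hε n
    exact div_nonneg (hnn _ (Set.mem_Ici.mpr (by positivity))) (hnn _ (Set.mem_Ici.mpr (Nat.cast_nonneg n)))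
  have hle1 : ∀ ε : ℝ, 0 < ε → ε ≤ 1 → ∀ n : ℕ, f ((n:ℝ) * ε) / f (n:ℝ) ≤ 1 := by
    intro ε hε hε1 n
    rcases Nat.eq_zero_or_pos n with hn | hn
    · subst hn; simp [hf0]
    · have hn0 : (0:ℝ) < n := by exact_mod_cast hn
      have h1 : f ((n:ℝ) * ε) ≤ f (n:ℝ) := by
        apply hmono (Set.mem_Ici.mpr (by positivity)) (Set.mem_Ici.mpr (Nat.cast_nonneg n))
        exact mul_le_of_le_one_right (le_of_lt hn0) hε1
      have hfn : 0 < f (n:ℝ) := by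
        rcases (hnn _ (Set.mem_Ici.mpr (Nat.cast_nonneg n))).lt_or_eq with h | h
        · exact h
        · exfalso
          have := (hz _ (Set.mem_Ici.mpr (Nat.cast_nonneg n))).mp h.symm
          exact hn0.ne' this
      exact div_le_one_of_le₀ h1 (le_of_lt hfn)
  have hbdd : ∀ ε : ℝ, 0 < ε → ε ≤ 1 →
      IsBoundedUnder (· ≤ ·) atTop (fun n : ℕ => f ((n:ℝ) * ε) / f (n:ℝ)) :=
    fun ε hε hε1 => isBoundedUnder_of ⟨1, hle1 ε hε hε1⟩
  have hcob : ∀ ε : ℝ, 0 < ε →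
      IsCoboundedUnder (· ≤ ·) atTop (fun n : ℕ => f ((n:ℝ) * ε) / f (n:ℝ)) :=
    fun ε hε => isCoboundedUnder_le_of_le atTop (hge ε hε)
  have hphi_nonneg : ∀ ε : ℝ, 0 < ε → ε ≤ 1 → 0 ≤ modPhi f ε := by
    intro ε hε hε1
    exact le_limsup_of_frequently_le (Frequently.of_forall (hge ε hε)) (hbdd ε hε hε1)
  have hphi_mono : ∀ ε ε' : ℝ, 0 < ε → ε ≤ ε' → ε' ≤ 1 → modPhi f ε ≤ modPhi f ε' := by
    intro ε ε' hε hεε' hε1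
    apply limsup_le_limsup _ (hcob ε hε) (hbdd ε' (lt_of_lt_of_le hε hεε') hε1)
    apply Eventually.of_forall
    intro n
    have h1 : f ((n:ℝ) * ε) ≤ f ((n:ℝ) * ε') := by
      apply hmono (Set.mem_Ici.mpr (by positivity))
        (Set.mem_Ici.mpr (mul_nonneg (Nat.cast_nonneg n) (le_of_lt (lt_of_lt_of_le hε hεε'))))
      exact mul_le_mul_of_nonneg_left hεε' (Nat.cast_nonneg n)
    exact div_le_div_of_nonneg_right h1 (hnn _ (Set.mem_Ici.mpr (Nat.cast_nonneg n)))
  rw [Compatible, Metric.tendsto_nhdsWithin_nhds] at hnc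
  push_neg at hnc
  obtain ⟨c, hc, hcl⟩ := hnc
  refine ⟨c, hc, ?_⟩
  intro m N
  have hm1 : (0:ℝ) < 1/((m:ℝ)+1) := by positivity
  obtain ⟨x, hxIoi, hxd, hxc⟩ := hcl (1/((m:ℝ)+1)) hm1
  have hx0 : (0:ℝ) < x := hxIoi
  rw [Real.dist_eq, sub_zero] at hxd
  rw [Real.dist_eq, sub_zero] at hxc
  have hxlt : x < 1/((m:ℝ)+1) := by rwa [abs_of_pos hx0] at hxd
  have hm1le : 1/((m:ℝ)+1) ≤ 1 := by
    rw [div_le_one (by positivity)]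
    have : (0:ℝ) ≤ (m:ℝ) := Nat.cast_nonneg m
    linarith
  have hx1 : x ≤ 1 := le_of_lt (lt_of_lt_of_le hxlt hm1le)
  have habs : c ≤ modPhi f x := by
    rwa [abs_of_nonneg (hphi_nonneg x hx0 hx1)] at hxc
  have hphi : c ≤ modPhi f (1/((m:ℝ)+1)) :=
    habs.trans (hphi_mono x _ hx0 (le_of_lt hxlt) hm1le)
  have hphi' : c ≤ Filter.limsup (fun n : ℕ => f ((n : ℝ) * (1/((m:ℝ)+1))) / f (n : ℝ)) Filter.atTop := hphi
  have hfreq : ∃ᶠ n : ℕ in atTop, c/2 < f ((n:ℝ) * (1/((m:ℝ)+1))) / f (n:ℝ) :=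
    frequently_lt_of_lt_limsup (hcob _ hm1) (lt_of_lt_of_le (by linarith) hphi')
  rw [frequently_atTop] at hfreq
  obtain ⟨n, hn, hcn⟩ := hfreq N
  refine ⟨n, hn, ?_⟩
  rwa [mul_one_div] at hcn


lemma construction_aux (f : ℝ → ℝ)
    (hnn : ∀ x ∈ Set.Ici (0:ℝ), 0 ≤ f x)
    (hz : ∀ x ∈ Set.Ici (0:ℝ), (f x = 0 ↔ x = 0))
    (hmono : MonotoneOn f (Set.Ici (0:ℝ)))
    (c : ℝ) (hc : 0 < c)
    (hQ : ∀ m N : ℕ, ∃ n : ℕ, N ≤ n ∧ c/2 < f ((n:ℝ)/((m:ℝ)+1)) / f (n:ℝ)) :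
    ∃ B : ℕ → Set ℝ, (∀ n, (B n).Nonempty ∧ IsClosed (B n)) ∧
      WijsmanStrongCesaro B ({0} : Set ℝ) ∧ ¬ WijsmanFStrongCesaro f B ({0} : Set ℝ) := by
  classical
  choose g hg1 hg2 using hQ
  -- the checkpoint sequence
  set nseq : ℕ → ℕ := fun m =>
    Nat.rec (g 0 1) (fun m ih => g (m+1) (4*(m+2)*(ih + m + 2))) m with hnseq
  have hnseq0 : nseq 0 = g 0 1 := rfl
  have hnseqS : ∀ m, nseq (m+1) = g (m+1) (4*(m+2)*(nseq m + m + 2)) := fun m => rfl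
  have hgrow : ∀ m, 4*(m+2)*(nseq m + m + 2) ≤ nseq (m+1) := by
    intro m; rw [hnseqS]; exact hg1 _ _
  have hn1 : ∀ m, 1 ≤ nseq m := by
    intro m
    cases m with
    | zero => exact hg1 0 1
    | succ m =>
      have h1 : nseq m + m + 2 ≤ 4*(m+2)*(nseq m + m + 2) :=
        Nat.le_mul_of_pos_left _ (by omega)
      have h2 := hgrow m
      omega
  have hQn : ∀ m, c/2 < f ((nseq m : ℝ)/((m:ℝ)+1)) / f ((nseq m : ℝ)) := by
    intro m
    cases m with
    | zero => exact hg2 0 1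
    | succ m => rw [hnseqS]; exact hg2 _ _
  -- the block lengths
  set cseq : ℕ → ℕ := fun m => (nseq m + m)/(m+1) with hcseq
  have hcmul_le : ∀ m, (m+1) * cseq m ≤ nseq m + m := by
    intro m; rw [hcseq, mul_comm]; exact Nat.div_mul_le_self _ _
  have hcmul_ge : ∀ m, nseq m ≤ (m+1) * cseq m := by
    intro m
    have h : (m+1) * cseq m + (nseq m + m) % (m+1) = nseq m + m :=
      Nat.div_add_mod (nseq m + m) (m+1)
    have h2 : (nseq m + m) % (m+1) < m+1 := Nat.mod_lt _ (Nat.succ_pos m)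
    linarith
  have hc1 : ∀ m, 1 ≤ cseq m := by
    intro m
    by_contra h
    push_neg at h
    have h0 : cseq m = 0 := Nat.lt_one_iff.mp h
    have h1 := hcmul_ge m
    rw [h0, Nat.mul_zero] at h1
    exact absurd (le_trans (hn1 m) h1) (by omega)
  have hcd : ∀ m, cseq m ≤ nseq m := by
    intro m
    have h1 := hcmul_le m
    have ha : (m+1) * cseq m = m * cseq m + cseq m := by ring
    have hb : m ≤ m * cseq m := Nat.le_mul_of_pos_right _ (hc1 m)
    linarith
  have hc2 : ∀ m, 2 * cseq m ≤ cseq (m+1) := by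
    intro m
    have e0 : (m+2) * (4*(nseq m + m + 2)) ≤ nseq (m+1) := by
      have := hgrow m
      have : 4*(m+2)*(nseq m + m + 2) = (m+2) * (4*(nseq m + m + 2)) := by ring
      omega
    have e1 : 4*(nseq m + m + 2) ≤ nseq (m+1) / (m+2) :=
      (Nat.le_div_iff_mul_le (by omega)).mpr (by rw [mul_comm] at e0; omega)
    have e2 : nseq (m+1)/(m+2) ≤ cseq (m+1) := by
      have : nseq (m+1)/(m+2) ≤ (nseq (m+1) + (m+1))/(m+2) :=
        Nat.div_le_div_right (by omega)
      exact this
    have e3 : cseq m ≤ nseq m + m := Nat.div_le_self _ _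
    omega
  have hsep : ∀ m, nseq m + cseq (m+1) ≤ nseq (m+1) := by
    intro m
    have s1 : cseq (m+1) ≤ nseq (m+1)/(m+2) + 1 := by
      have hcs : cseq (m+1) = (nseq (m+1) + (m+1))/(m+2) := rfl
      have h1 : (nseq (m+1) + (m+1))/(m+2) ≤ (nseq (m+1) + (m+2))/(m+2) :=
        Nat.div_le_div_right (by omega)
      have h2 : (nseq (m+1) + (m+2))/(m+2) = nseq (m+1)/(m+2) + 1 :=
        Nat.add_div_right _ (by omega)
      omega
    have s2 : nseq (m+1)/(m+2) ≤ nseq (m+1)/2 := Nat.div_le_div_left (by omega) (by omega)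
    have s3 : 2*(nseq m + m + 2) ≤ nseq (m+1)/2 := by
      apply (Nat.le_div_iff_mul_le (by omega)).mpr
      have h4 : 2*(nseq m + m + 2)*2 ≤ 4*(m+2)*(nseq m + m + 2) := by nlinarith
      have := hgrow m
      omega
    have s4 : nseq (m+1)/2 * 2 ≤ nseq (m+1) := Nat.div_mul_le_self _ _
    omega
  have hmono_n : StrictMono nseq := by
    apply strictMono_nat_of_lt_succ
    intro m
    have := hsep m
    have := hc1 (m+1)
    omega
  set Tseq : ℕ → ℕ := fun m => ∑ i ∈ Finset.range (m+1), cseq i with hTseq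
  have hT : ∀ m, Tseq m ≤ 2 * cseq m := by
    intro m
    induction m with
    | zero => simp [hTseq]; omega
    | succ m ih =>
      have h1 : Tseq (m+1) = Tseq m + cseq (m+1) := Finset.sum_range_succ _ _
      have := hc2 m
      omega
  set O : ℕ → Prop := fun j => ∃ i, nseq i - cseq i ≤ j ∧ j < nseq i with hO
  set Scard : ℕ → ℕ := fun N => ((Finset.range N).filter O).card with hScard
  have hstart_mono : Monotone (fun i => nseq i - cseq i) := by
    apply monotone_nat_of_le_succ
    intro i
    have h1 := hsep i
    have h2 := hcd i
    show nseq i - cseq i ≤ nseq (i+1) - cseq (i+1)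
    omega
  have hlow : ∀ m, cseq m ≤ Scard (nseq m) := by
    intro m
    have hsub : Finset.Ico (nseq m - cseq m) (nseq m) ⊆ (Finset.range (nseq m)).filter O := by
      intro j hj
      rw [Finset.mem_Ico] at hj
      rw [Finset.mem_filter, Finset.mem_range]
      exact ⟨hj.2, ⟨m, hj.1, hj.2⟩⟩
    have hcc := Finset.card_le_card hsub
    rw [Nat.card_Ico] at hcc
    have h1 := hcd m
    have h2 : Scard (nseq m) = ((Finset.range (nseq m)).filter O).card := rfl
    omega
  have hupp : ∀ m N, N ≤ nseq (m+1) - cseq (m+1) → Scard N ≤ Tseq m := by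
    intro m N hN
    have hsub : (Finset.range N).filter O ⊆
        (Finset.range (m+1)).biUnion (fun i => Finset.Ico (nseq i - cseq i) (nseq i)) := by
      intro j hj
      rw [Finset.mem_filter, Finset.mem_range] at hj
      obtain ⟨hjN, i, hi1, hi2⟩ := hj
      have him : i < m+1 := by
        by_contra h
        push_neg at h
        have := hstart_mono h
        simp only [] at this
        omega
      rw [Finset.mem_biUnion]
      exact ⟨i, Finset.mem_range.mpr him, Finset.mem_Ico.mpr ⟨hi1, hi2⟩⟩
    calc Scard N ≤ _ := Finset.card_le_card hsub
      _ ≤ ∑ i ∈ Finset.range (m+1), (Finset.Ico (nseq i - cseq i) (nseq i)).card :=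
          Finset.card_biUnion_le
      _ ≤ Tseq m := by
          apply Finset.sum_le_sum
          intro i _
          rw [Nat.card_Ico]
          have := hcd i
          omega
  have hbr : ∀ m N, nseq m ≤ N → ∃ m', m ≤ m' ∧ nseq m' ≤ N ∧ N < nseq (m'+1) := by
    intro m N h
    by_contra hcon
    push_neg at hcon
    have hall : ∀ k, nseq (m+k) ≤ N := by
      intro k
      induction k with
      | zero => simpa using h
      | succ k ih =>
        have h2 := hcon (m+k) (Nat.le_add_right _ _) ih
        have h3 : m + (k+1) = (m+k)+1 := by omega
        rw [h3]
        exact h2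
    have h4 := hall (N+1)
    have h5 : m + (N+1) ≤ nseq (m+(N+1)) := hmono_n.le_apply
    omega
  have hkey : ∀ m N, nseq m ≤ N → Scard N * (m+1) ≤ 4*N := by
    intro m N hmN
    obtain ⟨m', hmm', hm'N, hNm'⟩ := hbr m N hmN
    have h8 : m' ≤ nseq m' := hmono_n.le_apply
    by_cases hcase : N ≤ nseq (m'+1) - cseq (m'+1)
    · have h1 : Scard N ≤ 2 * cseq m' := le_trans (hupp m' N hcase) (hT m')
      have h2 : Scard N * (m+1) ≤ (2*cseq m') * (m'+1) :=
        Nat.mul_le_mul h1 (by omega)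
      have h3 : (2*cseq m') * (m'+1) = 2*((m'+1) * cseq m') := by ring
      have h4 := hcmul_le m'
      omega
    · push_neg at hcase
      have hN1 : N ≤ nseq (m'+1) := le_of_lt hNm'
      have hupN : N ≤ nseq (m'+1+1) - cseq (m'+1+1) := by
        have := hsep (m'+1)
        omega
      have h1 : Scard N ≤ 2 * cseq (m'+1) := le_trans (hupp (m'+1) N hupN) (hT (m'+1))
      have h2 : Scard N * (m+1) ≤ (2*cseq (m'+1)) * (m'+1) := Nat.mul_le_mul h1 (by omega)
      have h3 : (2*cseq (m'+1)) * (m'+1) = 2*((m'+1) * cseq (m'+1)) := by ring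
      have h4 : (m'+1+1) * cseq (m'+1) = (m'+1)*cseq (m'+1) + cseq (m'+1) := by ring
      have h5 := hcmul_le (m'+1)
      have h7 : cseq (m'+1) ≤ nseq (m'+1) := hcd (m'+1)
      omega
  have hdens : Tendsto (fun N : ℕ => (Scard N : ℝ)/(N : ℝ)) atTop (nhds 0) := by
    rw [Metric.tendsto_atTop]
    intro ε hε
    obtain ⟨m, hm⟩ := exists_nat_gt (4/ε)
    refine ⟨nseq m, fun N hN => ?_⟩
    have hN1 : 1 ≤ N := le_trans (hn1 m) hN
    have hk := hkey m N hN
    have hNpos : (0:ℝ) < N := by exact_mod_cast hN1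
    have hq : (Scard N : ℝ)/N ≤ 4/((m:ℝ)+1) := by
      rw [div_le_div_iff₀ hNpos (by positivity)]
      exact_mod_cast hk
    have hlt : 4/((m:ℝ)+1) < ε := by
      rw [div_lt_iff₀ (by positivity)]
      have h2 : (4:ℝ) < m * ε := (div_lt_iff₀ hε).mp hm
      nlinarith
    rw [Real.dist_eq, sub_zero, abs_of_nonneg (div_nonneg (Nat.cast_nonneg _) (Nat.cast_nonneg _))]
    exact lt_of_le_of_lt hq hlt
  set v : ℕ → ℝ := fun j => if O j then (1:ℝ) else 0 with hv
  have hv0 : ∀ j, 0 ≤ v j := by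
    intro j; by_cases h : O j <;> simp [hv, h]
  have hsumv : ∀ N, ∑ j ∈ Finset.range N, v j = (Scard N : ℝ) := by
    intro N
    have : Scard N = ((Finset.range N).filter O).card := rfl
    rw [this]
    rw [hv]
    rw [Finset.sum_boole]
  have habs_le : ∀ (t : ℝ) (j : ℕ),
      |infDist t {v j} - infDist t ({0} : Set ℝ)| ≤ v j := by
    intro t j
    rw [Metric.infDist_singleton, Metric.infDist_singleton, Real.dist_eq, Real.dist_eq]
    have h1 : |(|t - v j|) - (|t - 0|)| ≤ |(t - v j) - (t - 0)| :=
      abs_abs_sub_abs_le_abs_sub _ _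
    have h2 : (t - v j) - (t - 0) = -(v j) := by ring
    rw [h2, abs_neg, abs_of_nonneg (hv0 j)] at h1
    exact h1
  refine ⟨fun j => {v j}, fun j => ⟨Set.singleton_nonempty _, isClosed_singleton⟩, ?_, ?_⟩
  · -- Wijsman strong Cesàro
    intro t
    apply squeeze_zero (g := fun n : ℕ => (Scard n : ℝ)/(n:ℝ))
    · intro n
      positivity
    · intro n
      rw [← hsumv n]
      apply div_le_div_of_nonneg_right _ (Nat.cast_nonneg n)
      exact Finset.sum_le_sum (fun j _ => habs_le t j)
    · exact hdens
  · -- not Wijsman f-strong Cesàro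
    intro hW
    have h0 := hW 0
    rw [FStrongCesaro] at h0
    have hEq : ∀ n : ℕ, (∑ j ∈ Finset.range n,
        |infDist (0:ℝ) {v j} - infDist (0:ℝ) ({0} : Set ℝ)|) = (Scard n : ℝ) := by
      intro n
      rw [← hsumv n]
      apply Finset.sum_congr rfl
      intro j _
      rw [Metric.infDist_singleton, Metric.infDist_singleton, Real.dist_eq, Real.dist_eq]
      rw [zero_sub, zero_sub, abs_neg, abs_neg, abs_zero, sub_zero, abs_abs,
        abs_of_nonneg (hv0 j)]
    simp only [hEq] at h0
    have hev := h0.eventually (Filter.eventually_iff_exists_mem.mpr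
      ⟨Set.Iio (c/2), Iio_mem_nhds (half_pos hc), fun x hx => hx⟩)
    rw [eventually_atTop] at hev
    obtain ⟨N, hN⟩ := hev
    have hnm : N ≤ nseq N := hmono_n.le_apply
    have hcontra : f ((Scard (nseq N) : ℝ)) / f ((nseq N : ℝ)) < c/2 := hN (nseq N) hnm
    have hfn : 0 < f ((nseq N : ℝ)) := by
      rcases (hnn _ (Set.mem_Ici.mpr (Nat.cast_nonneg _))).lt_or_eq with h | h
      · exact h
      · exfalso
        have h1 := (hz _ (Set.mem_Ici.mpr (Nat.cast_nonneg _))).mp h.symm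
        have h2 : (1:ℝ) ≤ (nseq N : ℝ) := by exact_mod_cast hn1 N
        rw [h1] at h2
        norm_num at h2
    have hd1 : ((nseq N : ℝ))/((N:ℝ)+1) ≤ (cseq N : ℝ) := by
      rw [div_le_iff₀ (by positivity)]
      have := hcmul_ge N
      have hcast : (nseq N : ℝ) ≤ ((N+1) * cseq N : ℕ) := by exact_mod_cast this
      push_cast at hcast ⊢
      linarith
    have hmono1 : f ((nseq N : ℝ)/((N:ℝ)+1)) ≤ f ((cseq N : ℝ)) :=
      hmono (Set.mem_Ici.mpr (by positivity)) (Set.mem_Ici.mpr (Nat.cast_nonneg _)) hd1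
    have hmono2 : f ((cseq N : ℝ)) ≤ f ((Scard (nseq N) : ℝ)) :=
      hmono (Set.mem_Ici.mpr (Nat.cast_nonneg _)) (Set.mem_Ici.mpr (Nat.cast_nonneg _))
        (by exact_mod_cast hlow N)
    have hq := hQn N
    have hfinal : c/2 < f ((Scard (nseq N) : ℝ)) / f ((nseq N : ℝ)) :=
      lt_of_lt_of_le hq ((div_le_div_iff_of_pos_right hfn).mpr (hmono1.trans hmono2))
    linarith


theorem exists_cesaro_not_fcesaro_of_not_compatible
    (f : ℝ → ℝ) (hf : IsModulus f) (hnc : ¬ Compatible f) :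
    (∃ B : ℕ → Set ℝ, (∀ n, (B n).Nonempty ∧ IsClosed (B n)) ∧
      WijsmanStrongCesaro B ({0} : Set ℝ) ∧ ¬ WijsmanFStrongCesaro f B ({0} : Set ℝ)) ∧
    ((∀ (C : ℕ → Set ℝ) (D : Set ℝ), (∀ n, (C n).Nonempty ∧ IsClosed (C n)) →
        D.Nonempty → IsClosed D → WijsmanStrongCesaro C D → WijsmanFStrongCesaro f C D) →
      Compatible f) := by
  obtain ⟨hnn, hz, -, hmono, -, -⟩ := hf
  obtain ⟨c, hc, hQ⟩ := freq_aux f hnn hz hmono hnc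
  have hmain := construction_aux f hnn hz hmono c hc hQ
  refine ⟨hmain, fun H => ?_⟩
  obtain ⟨B, hB, hW, hnW⟩ := hmain
  exact absurd (H B ({0} : Set ℝ) hB (Set.singleton_nonempty 0) isClosed_singleton hW) hnW
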